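/- Let k be an algebraically closed field of characteristic 3 and consider f(x) = x^9 + a_8 x^8 + ... + a_2 x^2 + x with nonzero discriminant. If a_2 = a_8 = 0 and the Cartier–Manin matrix of y^2 = f(x) has rank greater than 2, then a_5 ≠ 0 and the rank is exactly 4. -/

import Mathlib

open Polynomial Matrix

/-- Discriminant of a (monic) degree-9 polynomial, defined as the determinant of the
17×17 Sylvester matrix of `f` (formal degree 9) and its derivative (formal degree 8).
For monic `f` of degree 9 this equals the discriminant, since `(-1)^(9·8/2) = 1`. -/
noncomputable def disc9 {k : Type*} [Field k] (f : Polynomial k) : k :=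
  (Matrix.of fun i j : Fin 17 =>
    if (i : ℕ) < 8 then
      (if (j : ℕ) ≤ (i : ℕ) + 9 then f.coeff (9 + (i : ℕ) - (j : ℕ)) else 0)
    else
      (if (j : ℕ) ≤ (i : ℕ) then (Polynomial.derivative f).coeff ((i : ℕ) - (j : ℕ)) else 0)).det

/-- char 3, `f = x^9 + a_8x^8 + ⋯ + a_2x^2 + x` with nonzero discriminant and
`a_2 = a_8 = 0`. If the Cartier–Manin matrix `H` has rank > 2, then `a_5 ≠ 0` and the rank
is exactly 4. -/
theorem stmt2 {k : Type*} [Field k] [IsAlgClosed k] [CharP k 3]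
    (a3 a4 a5 a6 a7 : k) (f : k[X])
    (hf : f = X ^ 9 + C a7 * X ^ 7 + C a6 * X ^ 6 + C a5 * X ^ 5 +
      C a4 * X ^ 4 + C a3 * X ^ 3 + X)
    (hdisc : disc9 f ≠ 0)
    (H : Matrix (Fin 4) (Fin 4) k)
    (hH : ∀ i j, H i j ^ 3 =
      !![0, 1, 0, 0; a5, a4, a3, 0; 0, a7, a6, a5; 0, 0, 1, 0] i j)
    (hrank : 2 < H.rank) :
    a5 ≠ 0 ∧ H.rank = 4 := by
  have hmap : H.map (frobenius k 3) = !![0, 1, 0, 0; a5, a4, a3, 0; 0, a7, a6, a5; 0, 0, 1, 0] := by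
    ext i j
    simp only [Matrix.map_apply, frobenius_def]
    exact hH i j
  by_cases h5 : a5 = 0
  · exfalso
    subst h5
    -- columns 0 and 3 of H vanish
    have hz : ∀ i j, (j = 0 ∨ j = 3) → H i j = 0 := by
      intro i j hj
      have h3 : H i j ^ 3 = 0 := by
        rcases hj with rfl | rfl <;> rw [hH i] <;> fin_cases i <;> simp [Matrix.vecHead, Matrix.vecTail]
      exact pow_eq_zero_iff (n := 3) (by norm_num) |>.mp h3
    have hfac : H = (H.submatrix id (![1, 2] : Fin 2 → Fin 4)) *
        (!![0, 1, 0, 0; 0, 0, 1, 0] : Matrix (Fin 2) (Fin 4) k) := by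
      ext i j
      rw [Matrix.mul_apply]
      fin_cases j <;>
        simp [Fin.sum_univ_two, Matrix.submatrix_apply, hz i 0 (Or.inl rfl), hz i 3 (Or.inr rfl)]
    have : H.rank ≤ 2 := by
      rw [hfac]
      calc _ ≤ (H.submatrix id (![1, 2] : Fin 2 → Fin 4)).rank := Matrix.rank_mul_le_left _ _
        _ ≤ Fintype.card (Fin 2) := Matrix.rank_le_card_width _
        _ = 2 := by simp
    omega
  · refine ⟨h5, ?_⟩
    have hdet3 : H.det ^ 3 = a5 ^ 2 := by
      have h1 := RingHom.map_det (frobenius k 3) H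
      rw [RingHom.mapMatrix_apply, hmap] at h1
      have h2 : (!![0, 1, 0, 0; a5, a4, a3, 0; 0, a7, a6, a5; 0, 0, 1, 0] :
          Matrix (Fin 4) (Fin 4) k).det = a5 ^ 2 := by
        simp [Matrix.det_succ_row_zero, Fin.sum_univ_succ, Fin.succAbove, Matrix.vecHead, Matrix.vecTail]; ring
      rw [h2] at h1
      rw [frobenius_def] at h1
      exact h1
    have hdet : H.det ≠ 0 := by
      intro h
      rw [h] at hdet3
      apply h5
      have : a5 ^ 2 = 0 := by rw [← hdet3]; ring
      exact pow_eq_zero_iff (n := 2) (by norm_num) |>.mp this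
    have : IsUnit H := (Matrix.isUnit_iff_isUnit_det H).mpr hdet.isUnit
    rw [Matrix.rank_of_isUnit H this]
    simp
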